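/- Convergence of PnP-ADMM. Let n ≥ 1, γ > 0, and let g : ℝ^n → ℝ be convex and Lipschitz continuous with constant L. Let D : ℝ^n → ℝ^n be a map whose residual I − D is firmly nonexpansive, let G := prox_{γg}, and define S(v) := D(v) − G(2·D(v) − v). Assume there exists v* ∈ ℝ^n with S(v*) = 0, and set x* := D(v*). From initial points x^0, s^0 ∈ ℝ^n define the sequences z^k := G(x^{k−1} + s^{k−1}), x^k := D(z^k − s^{k−1}), s^k := s^{k−1} + x^k − z^k, and v^k := z^k − s^{k−1}, for k ≥ 1. Assume there is a constant R < ∞ such that ‖x^k − x*‖ ≤ R for all k ≥ 0. Then for every t ≥ 1, (1/t)·Σ_{k=1}^t ‖S(v^k)‖² ≤ (R + 2γL)²/t. -/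

import Mathlib

open scoped RealInnerProductSpace

/-- Euclidean space ℝ^n. -/
abbrev En (n : ℕ) := EuclideanSpace ℝ (Fin n)

/-- `G` is the proximal operator `prox_{γf}`: for every `z`, `G z` minimizes
`x ↦ (1/2)‖x − z‖² + γ f x` over `ℝ^n`. -/
def IsProx {n : ℕ} (γ : ℝ) (f : En n → ℝ) (G : En n → En n) : Prop :=
  ∀ z x : En n,
    (1 / 2 : ℝ) * ‖G z - z‖ ^ 2 + γ * f (G z) ≤ (1 / 2 : ℝ) * ‖x - z‖ ^ 2 + γ * f x

/-- A map `S : ℝ^n → ℝ^n` is firmly nonexpansive if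
`⟨S x − S y, x − y⟩ ≥ ‖S x − S y‖²` for all `x, y`. -/
def FirmlyNonexpansive {n : ℕ} (S : En n → En n) : Prop :=
  ∀ x y : En n, ‖S x - S y‖ ^ 2 ≤ ⟪S x - S y, x - y⟫

lemma limit1 {c e : ℝ} (hc : 0 ≤ c) (h : ∀ θ : ℝ, 0 < θ → θ < 1 → c * (1 - θ) ≤ e) :
    c ≤ e := by
  by_contra hlt
  push_neg at hlt
  have h2 := h (1/2) (by norm_num) (by norm_num)
  have he : 0 ≤ e := le_trans (by positivity) h2
  have hc0 : 0 < c := lt_of_le_of_lt he hlt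
  have hθ := h ((c - e)/(2*c)) (div_pos (by linarith) (by linarith))
    (by rw [div_lt_one (by positivity)]; linarith)
  have heq : c * (1 - (c - e)/(2*c)) = (c + e)/2 := by field_simp; ring
  rw [heq] at hθ
  linarith

lemma limit2 {c e : ℝ} (hc : 0 ≤ c) (he : 0 ≤ e)
    (h : ∀ θ : ℝ, 0 < θ → θ < 1 → c * (1 + θ) ≤ e) : 2 * c ≤ e := by
  by_contra hlt
  push_neg at hlt
  have hc0 : 0 < c := by linarith
  have hθ1 : (0:ℝ) < max (1/2) (e/(2*c)) := lt_max_of_lt_left (by norm_num)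
  have hθ2 : max (1/2) (e/(2*c)) < 1 := by
    apply max_lt (by norm_num)
    rw [div_lt_one (by positivity)]; linarith
  have hθ := h _ hθ1 hθ2
  have hmono : c * (1 + e/(2*c)) ≤ c * (1 + max (1/2) (e/(2*c))) := by
    apply mul_le_mul_of_nonneg_left _ hc0.le
    have := le_max_right (1/2) (e/(2*c)); linarith
  have heq : c * (1 + e/(2*c)) = c + e/2 := by field_simp
  rw [heq] at hmono
  linarith

lemma norm_combo {n : ℕ} (a b : En n) (θ : ℝ) :
    ‖a + θ • (b - a)‖ ^ 2 = (1-θ)*‖a‖^2 + θ*‖b‖^2 - θ*(1-θ)*‖a-b‖^2 := by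
  have h1 := norm_add_sq_real a (θ • (b-a))
  have h2 := norm_sub_sq_real a b
  have h3 : ⟪a, θ • (b-a)⟫ = θ*(⟪a,b⟫ - ‖a‖^2) := by
    rw [real_inner_smul_right, inner_sub_right, real_inner_self_eq_norm_sq]
  have h4 : ‖θ • (b-a)‖^2 = θ^2*‖a-b‖^2 := by
    rw [norm_smul, ← norm_neg (b-a), neg_sub, Real.norm_eq_abs, mul_pow, sq_abs]
  rw [h1, h3, h4, h2]; ring

/-- residual bound: `‖G w − w‖ ≤ γ L` for the prox of an `L`-Lipschitz convex function. -/
lemma prox_residual {n : ℕ} {γ L : ℝ} (hγ : 0 < γ) (hL : 0 ≤ L)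
    {g : En n → ℝ} (hconv : ConvexOn ℝ Set.univ g)
    (hlip : ∀ x y : En n, |g x - g y| ≤ L * ‖x - y‖)
    {G : En n → En n} (hG : IsProx γ g G) (w : En n) :
    ‖G w - w‖ ≤ γ * L := by
  set d : ℝ := ‖G w - w‖ with hd
  have hd0 : 0 ≤ d := norm_nonneg _
  have key : ∀ θ : ℝ, 0 < θ → θ < 1 → (d^2/2) * (1 + θ) ≤ γ * (L * d) := by
    intro θ h0 h1
    have hx := hG w (w + θ • (G w - w))
    have hwGw : w - G w = -(G w - w) := by abel
    have harg : (1-θ) • w + θ • (G w) = w + θ • (G w - w) := by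
      rw [smul_sub, sub_smul, one_smul]; abel
    have hcv := hconv.2 (Set.mem_univ w) (Set.mem_univ (G w)) (by linarith : (0:ℝ) ≤ 1-θ)
      h0.le (by ring)
    rw [harg] at hcv
    have hlb : g w - g (G w) ≤ L * d := by
      have hn : ‖w - G w‖ = d := by rw [hwGw, norm_neg]
      calc g w - g (G w) ≤ |g w - g (G w)| := le_abs_self _
        _ ≤ L * ‖w - G w‖ := hlip w (G w)
        _ = L * d := by rw [hn]
    have hnorm : ‖(w + θ • (G w - w)) - w‖^2 = θ^2 * d^2 := by
      have harg2 : (w + θ • (G w - w)) - w = θ • (G w - w) := by abel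
      rw [harg2, norm_smul, Real.norm_eq_abs, mul_pow, sq_abs]
    rw [hnorm] at hx
    have hγcv : γ * g (w + θ • (G w - w)) ≤ γ * ((1-θ) * g w + θ * g (G w)) :=
      mul_le_mul_of_nonneg_left hcv hγ.le
    have hstep : (d^2/2) * (1+θ) * (1-θ) ≤ γ * (L * d) * (1-θ) := by
      nlinarith [mul_le_mul_of_nonneg_left hlb (mul_nonneg hγ.le (by linarith : (0:ℝ) ≤ 1-θ))]
    have h1θ : (0:ℝ) < 1 - θ := by linarith
    exact le_of_mul_le_mul_right hstep h1θ
  have h2 : 2 * (d^2/2) ≤ γ * (L * d) :=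
    limit2 (by positivity) (by positivity) key
  rcases eq_or_lt_of_le hd0 with h | h
  · rw [← h]; positivity
  · have hdd : d * d ≤ (γ * L) * d := by nlinarith
    exact le_of_mul_le_mul_right hdd h

/-- the prox operator is firmly nonexpansive -/
lemma prox_firm {n : ℕ} {γ : ℝ} (hγ : 0 < γ)
    {g : En n → ℝ} (hconv : ConvexOn ℝ Set.univ g)
    {G : En n → En n} (hG : IsProx γ g G) :
    FirmlyNonexpansive G := by
  have claim : ∀ z1 z2 : En n,
      (1/2:ℝ) * ‖G z1 - z1‖^2 + γ * g (G z1) + ‖G z1 - G z2‖^2/2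
        ≤ (1/2:ℝ) * ‖G z2 - z1‖^2 + γ * g (G z2) := by
    intro z1 z2
    set p := G z1
    set q := G z2
    have key : ∀ θ : ℝ, 0 < θ → θ < 1 →
        (‖p - q‖^2/2) * (1-θ)
          ≤ ((1/2:ℝ) * ‖q - z1‖^2 + γ * g q) - ((1/2:ℝ) * ‖p - z1‖^2 + γ * g p) := by
      intro θ h0 h1
      have hx := hG z1 (p + θ • (q - p))
      have harg : (1-θ) • p + θ • q = p + θ • (q - p) := by
        rw [smul_sub, sub_smul, one_smul]; abel
      have hcv := hconv.2 (Set.mem_univ p) (Set.mem_univ q) (by linarith : (0:ℝ) ≤ 1-θ)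
        h0.le (by ring)
      rw [harg] at hcv
      have hγcv : γ * g (p + θ • (q - p)) ≤ γ * ((1-θ) * g p + θ * g q) :=
        mul_le_mul_of_nonneg_left hcv hγ.le
      have hshift : (p + θ • (q - p)) - z1 = (p - z1) + θ • ((q - z1) - (p - z1)) := by
        module
      have hnc := norm_combo (p - z1) (q - z1) θ
      have hpq : (p - z1) - (q - z1) = p - q := by abel
      rw [hpq] at hnc
      rw [hshift, hnc] at hx
      have hstep : (‖p - q‖^2/2) * (1-θ) * θ
          ≤ (((1/2:ℝ) * ‖q - z1‖^2 + γ * g q) - ((1/2:ℝ) * ‖p - z1‖^2 + γ * g p)) * θ := by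
        nlinarith [hx, hγcv]
      exact le_of_mul_le_mul_right hstep h0
    have := limit1 (by positivity) key
    linarith
  intro z1 z2
  have h1 := claim z1 z2
  have h2 := claim z2 z1
  set p := G z1
  set q := G z2
  have hqp : ‖q - p‖^2 = ‖p - q‖^2 := by rw [← norm_neg (q - p), neg_sub]
  rw [hqp] at h2
  have e1 := norm_sub_sq_real q z1
  have e2 := norm_sub_sq_real p z2
  have e3 := norm_sub_sq_real p z1
  have e4 := norm_sub_sq_real q z2
  have e5 : ⟪p - q, z1 - z2⟫ = ⟪p,z1⟫ - ⟪p,z2⟫ - ⟪q,z1⟫ + ⟪q,z2⟫ := by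
    rw [inner_sub_left, inner_sub_right, inner_sub_right]; ring
  linarith [h1, h2, e1, e2, e3, e4, e5]

lemma S_firm {n : ℕ} {D G S : En n → En n}
    (hD : FirmlyNonexpansive (fun x : En n => x - D x))
    (hGf : FirmlyNonexpansive G)
    (hS : ∀ v : En n, S v = D v - G ((2 : ℝ) • D v - v)) :
    FirmlyNonexpansive S := by
  intro u w
  set m : En n := D u - D w with hm
  set d : En n := u - w with hdd
  set r : En n := G ((2:ℝ) • D u - u) - G ((2:ℝ) • D w - w) with hr
  have hDexp := hD u w
  simp only at hDexp
  have hfix1 : (u - D u) - (w - D w) = d - m := by rw [hm, hdd]; abel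
  rw [hfix1] at hDexp
  have hGexp := hGf ((2:ℝ) • D u - u) ((2:ℝ) • D w - w)
  have hfix2 : ((2:ℝ) • D u - u) - ((2:ℝ) • D w - w) = (2:ℝ) • m - d := by
    rw [hm, hdd]; module
  rw [hfix2] at hGexp
  have hgoal : S u - S w = m - r := by rw [hS, hS, hm, hr]; abel
  rw [hgoal]
  have e1 := norm_sub_sq_real d m
  have e2 : ⟪d - m, d⟫ = ⟪d,d⟫ - ⟪m,d⟫ := by rw [inner_sub_left]
  have e3 : ⟪r, (2:ℝ) • m - d⟫ = 2*⟪r,m⟫ - ⟪r,d⟫ := by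
    rw [inner_sub_right, real_inner_smul_right]
  have e4 := norm_sub_sq_real m r
  have e5 : ⟪m - r, d⟫ = ⟪m,d⟫ - ⟪r,d⟫ := by rw [inner_sub_left]
  have c1 := real_inner_comm d m
  have c2 := real_inner_comm m r
  have c3 := real_inner_self_eq_norm_sq d
  rw [e2] at hDexp
  rw [e3] at hGexp
  rw [e4, e5]
  linarith

/-- Convergence of PnP-ADMM. -/
theorem pnp_admm_convergence {n : ℕ} (hn : 1 ≤ n)
    (γ : ℝ) (hγ : 0 < γ)
    (g : En n → ℝ) (hconv : ConvexOn ℝ Set.univ g)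
    (L : ℝ) (hlip : ∀ x y : En n, |g x - g y| ≤ L * ‖x - y‖)
    (D : En n → En n) (hD : FirmlyNonexpansive (fun x : En n => x - D x))
    (G : En n → En n) (hG : IsProx γ g G)
    (S : En n → En n) (hS : ∀ v : En n, S v = D v - G ((2 : ℝ) • D v - v))
    (vstar : En n) (hvstar : S vstar = 0)
    (xstar : En n) (hxstar : xstar = D vstar)
    (x0 s0 : En n)
    (x z s v : ℕ → En n)
    (hx0 : x 0 = x0) (hs0 : s 0 = s0)
    (hz : ∀ k : ℕ, 1 ≤ k → z k = G (x (k - 1) + s (k - 1)))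
    (hx : ∀ k : ℕ, 1 ≤ k → x k = D (z k - s (k - 1)))
    (hs : ∀ k : ℕ, 1 ≤ k → s k = s (k - 1) + x k - z k)
    (hv : ∀ k : ℕ, 1 ≤ k → v k = z k - s (k - 1))
    (R : ℝ) (hR : ∀ k : ℕ, ‖x k - xstar‖ ≤ R)
    (t : ℕ) (ht : 1 ≤ t) :
    (1 / (t : ℝ)) * ∑ k ∈ Finset.Icc 1 t, ‖S (v k)‖ ^ 2
      ≤ (R + 2 * γ * L) ^ 2 / (t : ℝ) := by
  -- L is nonnegative
  have hL : 0 ≤ L := by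
    set u : En n := EuclideanSpace.single (⟨0, hn⟩ : Fin n) (1:ℝ) with hu
    have hnu : ‖u - 0‖ = 1 := by
      rw [sub_zero, hu, EuclideanSpace.norm_single, norm_one]
    have h1 := hlip u 0
    rw [hnu, mul_one] at h1
    exact le_trans (abs_nonneg _) h1
  have hR0 : 0 ≤ R := le_trans (norm_nonneg _) (hR 0)
  have hGfirm : FirmlyNonexpansive G := prox_firm hγ hconv hG
  have hSfirm : FirmlyNonexpansive S := S_firm hD hGfirm hS
  have hres : ∀ w : En n, ‖G w - w‖ ≤ γ * L := prox_residual hγ hL hconv hlip hG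
  -- structural recursions
  have hsv : ∀ k : ℕ, 1 ≤ k → s k = x k - v k := by
    intro k hk; rw [hs k hk, hv k hk]; abel
  have hxv : ∀ k : ℕ, 1 ≤ k → x k = D (v k) := by
    intro k hk; rw [hx k hk, hv k hk]
  have hrec : ∀ k : ℕ, 1 ≤ k → v (k+1) = v k - S (v k) := by
    intro k hk
    have h1 : v (k+1) = z (k+1) - s k := by
      have := hv (k+1) (by omega); simpa using this
    have h2 : z (k+1) = G (x k + s k) := by
      have := hz (k+1) (by omega); simpa using this
    have h3 : x k + s k = (2:ℝ) • D (v k) - v k := by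
      rw [hsv k hk, hxv k hk]; module
    rw [h1, h2, h3, hsv k hk, hxv k hk, hS]
    abel
  -- descent inequality
  have hdesc : ∀ k : ℕ, 1 ≤ k →
      ‖S (v k)‖^2 + ‖v (k+1) - vstar‖^2 ≤ ‖v k - vstar‖^2 := by
    intro k hk
    have h1 : v (k+1) - vstar = (v k - vstar) - S (v k) := by rw [hrec k hk]; abel
    rw [h1, norm_sub_sq_real]
    have hfirm := hSfirm (v k) vstar
    rw [hvstar, sub_zero] at hfirm
    have c := real_inner_comm (v k - vstar) (S (v k))
    linarith
  -- telescoping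
  have htel : ∀ T : ℕ, 1 ≤ T →
      (∑ k ∈ Finset.Icc 1 T, ‖S (v k)‖^2) + ‖v (T+1) - vstar‖^2
        ≤ ‖v 1 - vstar‖^2 := by
    intro T hT
    induction T, hT using Nat.le_induction with
    | base =>
      rw [Finset.Icc_self, Finset.sum_singleton]
      exact hdesc 1 le_rfl
    | succ T hT ih =>
      rw [Finset.sum_Icc_succ_top (by omega : 1 ≤ T+1)]
      have hd := hdesc (T+1) (by omega)
      linarith
  -- bound on the first iterate
  have hbound : ‖v 1 - vstar‖ ≤ R + 2 * γ * L := by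
    have hz1 : z 1 = G (x 0 + s 0) := by
      have := hz 1 le_rfl; simpa using this
    have hv1 : v 1 = z 1 - s 0 := by
      have := hv 1 le_rfl; simpa using this
    have hb1 : ‖v 1 - x 0‖ ≤ γ * L := by
      have h1 : v 1 - x 0 = G (x 0 + s 0) - (x 0 + s 0) := by
        rw [hv1, hz1]; abel
      rw [h1]; exact hres _
    have hfixpt : G ((2:ℝ) • xstar - vstar) = xstar := by
      have h0 : D vstar - G ((2:ℝ) • D vstar - vstar) = 0 := by
        rw [← hS]; exact hvstar
      have h1 : G ((2:ℝ) • D vstar - vstar) = D vstar := by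
        have := sub_eq_zero.mp h0; exact this.symm
      rw [hxstar]; exact h1
    have hb2 : ‖vstar - xstar‖ ≤ γ * L := by
      have h2 : vstar - xstar = G ((2:ℝ) • xstar - vstar) - ((2:ℝ) • xstar - vstar) := by
        rw [hfixpt]; module
      rw [h2]; exact hres _
    calc ‖v 1 - vstar‖ = ‖(v 1 - x 0) + (x 0 - xstar) + (xstar - vstar)‖ := by
          congr 1; abel
      _ ≤ ‖v 1 - x 0‖ + ‖x 0 - xstar‖ + ‖xstar - vstar‖ := norm_add₃_le
      _ ≤ γ * L + R + γ * L := by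
          have h3 : ‖xstar - vstar‖ ≤ γ * L := by rw [norm_sub_rev]; exact hb2
          have h4 := hR 0
          gcongr
      _ = R + 2 * γ * L := by ring
  -- conclude
  have hsum : (∑ k ∈ Finset.Icc 1 t, ‖S (v k)‖^2) ≤ (R + 2 * γ * L)^2 := by
    have h1 := htel t ht
    have h2 : ‖v 1 - vstar‖^2 ≤ (R + 2 * γ * L)^2 :=
      pow_le_pow_left₀ (norm_nonneg _) hbound 2
    nlinarith [sq_nonneg ‖v (t+1) - vstar‖]
  have ht0 : (0:ℝ) < (t:ℝ) := by
    have : (1:ℝ) ≤ (t:ℝ) := by exact_mod_cast ht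
    linarith
  have heq : (R + 2 * γ * L)^2 / (t:ℝ) = (1/(t:ℝ)) * (R + 2 * γ * L)^2 := by ring
  rw [heq]
  exact mul_le_mul_of_nonneg_left hsum (by positivity)
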